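/- Let X ⊆ ℝⁿ be nonempty compact convex, F continuous monotone, f continuously differentiable and μ-strongly convex on X. Let x*_η solve VI(X, F + η∇f) for η > 0, and let (η_k) be a strictly positive sequence with η_k → 0. Then the sequence (x*_{η_k}) converges to the unique minimizer x* of f over SOL(X,F) (the solution set of VI(X,F)). -/

import Mathlib

open scoped RealInnerProductSpace
open Filter Set

-- gradient inequality for convex functions
lemma convex_grad_ineq {E : Type*} [NormedAddCommGroup E] [InnerProductSpace ℝ E] [CompleteSpace E]
    {s : Set E} {g : E → ℝ} (hconv : ConvexOn ℝ s g)
    {x y : E} {u : E} (hu : HasGradientAt g u x) (hx : x ∈ s) (hy : y ∈ s) :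
    ⟪u, y - x⟫ ≤ g y - g x := by
  set d := y - x with hd
  set φ : ℝ → ℝ := fun t => g (x + t • d) with hφ
  have hc : HasDerivAt (fun t : ℝ => x + t • d) d 0 := by
    simpa using ((hasDerivAt_id (0:ℝ)).smul_const d).const_add x
  have hgx : HasFDerivAt g (InnerProductSpace.toDual ℝ E u) ((fun t : ℝ => x + t • d) 0) := by
    simpa using hu.hasFDerivAt
  have hder : HasDerivAt φ ⟪u, d⟫ 0 := by
    have h := hgx.comp_hasDerivAt 0 hc
    simp at h
    exact h
  have hslope : Tendsto (slope φ 0) (nhdsWithin 0 (Ioi (0:ℝ))) (nhds ⟪u, d⟫) :=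
    (hasDerivAt_iff_tendsto_slope.mp hder).mono_left
      (nhdsWithin_mono _ (fun t ht => ne_of_gt ht))
  refine le_of_tendsto hslope ?_
  filter_upwards [Ioc_mem_nhdsGT (zero_lt_one)] with t ht
  have ht0 : 0 < t := ht.1
  have h1 : x + t • d = (1 - t) • x + t • y := by
    simp only [hd, smul_sub, sub_smul, one_smul]; abel
  have hcv := hconv.2 hx hy (by linarith [ht.2] : (0:ℝ) ≤ 1 - t) ht0.le (by ring)
  rw [← h1] at hcv
  have : φ t - φ 0 ≤ t * (g y - g x) := by
    simp only [φ, zero_smul, add_zero] at *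
    calc g (x + t • d) - g x ≤ ((1-t) • g x + t • g y) - g x := by linarith [hcv]
    _ = t * (g y - g x) := by simp [smul_eq_mul]; ring
  rw [slope_def_field, sub_zero, div_le_iff₀ ht0]
  linarith [this]

lemma hasGradientAt_half_norm_sq {E : Type*} [NormedAddCommGroup E] [InnerProductSpace ℝ E]
    [CompleteSpace E] (μ : ℝ) (x : E) :
    HasGradientAt (fun z => μ / 2 * ‖z‖ ^ 2) (μ • x) x := by
  rw [hasGradientAt_iff_hasFDerivAt]
  have h1 := ((hasFDerivAt_id x).inner ℝ (hasFDerivAt_id x)).const_mul (μ/2)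
  have hfun : (fun z : E => μ / 2 * ‖z‖ ^ 2) = fun z : E => μ / 2 * ⟪z, z⟫ := by
    funext z; rw [real_inner_self_eq_norm_sq]
  rw [hfun]
  refine h1.congr_fderiv ?_
  ext v
  simp [fderivInnerCLM_apply, InnerProductSpace.toDual_apply_apply, real_inner_smul_left,
    real_inner_comm]
  ring

lemma strong_grad_ineq {E : Type*} [NormedAddCommGroup E] [InnerProductSpace ℝ E]
    [CompleteSpace E] {s : Set E} {f : E → ℝ} {f' : E → E} {μ : ℝ}
    (hsc : StrongConvexOn s μ f) (hgrad : ∀ x, HasGradientAt f (f' x) x)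
    {x y : E} (hx : x ∈ s) (hy : y ∈ s) :
    f x + ⟪f' x, y - x⟫ + μ / 2 * ‖y - x‖ ^ 2 ≤ f y := by
  have hconv : ConvexOn ℝ s fun z => f z - μ / 2 * ‖z‖ ^ 2 := strongConvexOn_iff_convex.mp hsc
  have hg : HasGradientAt (fun z => f z - μ / 2 * ‖z‖ ^ 2) (f' x - μ • x) x := by
    rw [hasGradientAt_iff_hasFDerivAt] at *
    have := (hgrad x).hasFDerivAt.sub (hasGradientAt_half_norm_sq μ x).hasFDerivAt
    refine this.congr_fderiv ?_
    ext v
    simp [InnerProductSpace.toDual_apply_apply, inner_sub_left]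
  have key := convex_grad_ineq hconv hg hx hy
  have h5 : ⟪μ • x, y - x⟫ = μ * ⟪x, y⟫ - μ * ‖x‖ ^ 2 := by
    rw [real_inner_smul_left, inner_sub_right, real_inner_self_eq_norm_sq]; ring
  have h6 : ‖y - x‖ ^ 2 = ‖y‖ ^ 2 - 2 * ⟪x, y⟫ + ‖x‖ ^ 2 := by
    rw [norm_sub_sq_real, real_inner_comm]
  have e : ⟪f' x - μ • x, y - x⟫
      = ⟪f' x, y - x⟫ - μ / 2 * ‖y‖ ^ 2 + μ / 2 * ‖x‖ ^ 2 + μ / 2 * ‖y - x‖ ^ 2 := by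
    rw [inner_sub_left, h5, h6]; ring
  linarith [key, e]

theorem stmt_16 (n : ℕ) (X : Set (EuclideanSpace ℝ (Fin n)))
    (hXne : X.Nonempty) (hXcpt : IsCompact X) (hXconv : Convex ℝ X)
    (F : EuclideanSpace ℝ (Fin n) → EuclideanSpace ℝ (Fin n)) (hFc : Continuous F)
    (hmono : ∀ u v, 0 ≤ ⟪F u - F v, u - v⟫)
    (f : EuclideanSpace ℝ (Fin n) → ℝ)
    (f' : EuclideanSpace ℝ (Fin n) → EuclideanSpace ℝ (Fin n))
    (hgrad : ∀ x, HasGradientAt f (f' x) x) (hf'c : Continuous f')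
    (μ : ℝ) (hμ : 0 < μ) (hsc : StrongConvexOn X μ f)
    (η : ℕ → ℝ) (hηpos : ∀ k, 0 < η k)
    (hη0 : Filter.Tendsto η Filter.atTop (nhds 0))
    (xη : ℕ → EuclideanSpace ℝ (Fin n))
    (hxη : ∀ k, xη k ∈ X ∧ ∀ y ∈ X, 0 ≤ ⟪F (xη k) + η k • f' (xη k), y - xη k⟫)
    (xstar : EuclideanSpace ℝ (Fin n))
    (hstar : xstar ∈ {x ∈ X | ∀ y ∈ X, 0 ≤ ⟪F x, y - x⟫} ∧
      ∀ z ∈ {x ∈ X | ∀ y ∈ X, 0 ≤ ⟪F x, y - x⟫}, f xstar ≤ f z) :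
    Filter.Tendsto xη Filter.atTop (nhds xstar) := by
  obtain ⟨⟨hxsX, hVIstar⟩, hmin⟩ := hstar
  have hfc : Continuous f := by
    rw [continuous_iff_continuousAt]
    exact fun x => (hgrad x).differentiableAt.continuousAt
  have hkey : ∀ k, μ / 2 * ‖xstar - xη k‖ ^ 2 ≤ f xstar - f (xη k) := by
    intro k
    obtain ⟨hxk, hVIk⟩ := hxη k
    have h1 : 0 ≤ ⟪F xstar, xη k - xstar⟫ := hVIstar (xη k) hxk
    have h2 : 0 ≤ ⟪F (xη k) + η k • f' (xη k), xstar - xη k⟫ := hVIk xstar hxsX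
    have h3 : 0 ≤ ⟪F (xη k) - F xstar, xη k - xstar⟫ := hmono (xη k) xstar
    have hexp : ⟪F (xη k) + η k • f' (xη k), xstar - xη k⟫
        = ⟪F (xη k), xstar - xη k⟫ + η k * ⟪f' (xη k), xstar - xη k⟫ := by
      rw [inner_add_left, real_inner_smul_left]
    have h5 : ⟪F (xη k) - F xstar, xη k - xstar⟫
        = ⟪F (xη k), xη k - xstar⟫ - ⟪F xstar, xη k - xstar⟫ := inner_sub_left _ _ _
    have h6 : ⟪F (xη k), xstar - xη k⟫ = - ⟪F (xη k), xη k - xstar⟫ := by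
      rw [show xstar - xη k = -(xη k - xstar) by abel, inner_neg_right]
    have h7 : 0 ≤ η k * ⟪f' (xη k), xstar - xη k⟫ := by linarith
    have h4 : 0 ≤ ⟪f' (xη k), xstar - xη k⟫ :=
      nonneg_of_mul_nonneg_left (by linarith [h7] : 0 ≤ ⟪f' (xη k), xstar - xη k⟫ * η k) (hηpos k)
    have h8 := strong_grad_ineq hsc hgrad hxk hxsX
    linarith [h8]
  refine Filter.tendsto_of_subseq_tendsto fun ns hns => ?_
  obtain ⟨a, haX, φ, hφmono, hφtend⟩ :=
    hXcpt.tendsto_subseq (x := fun k => xη (ns k)) (fun k => (hxη _).1)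
  refine ⟨φ, ?_⟩
  have hxφ : Filter.Tendsto (fun k => xη (ns (φ k))) Filter.atTop (nhds a) := hφtend
  have hnsφ : Filter.Tendsto (fun k => ns (φ k)) Filter.atTop Filter.atTop :=
    hns.comp hφmono.tendsto_atTop
  have hηφ : Filter.Tendsto (fun k => η (ns (φ k))) Filter.atTop (nhds 0) := hη0.comp hnsφ
  have haSOL : ∀ y ∈ X, 0 ≤ ⟪F a, y - a⟫ := by
    intro y hy
    have htend : Filter.Tendsto
        (fun k => ⟪F (xη (ns (φ k))) + η (ns (φ k)) • f' (xη (ns (φ k))), y - xη (ns (φ k))⟫)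
        Filter.atTop (nhds ⟪F a + (0:ℝ) • f' a, y - a⟫) := by
      exact Filter.Tendsto.inner
        (((hFc.tendsto a).comp hxφ).add (hηφ.smul ((hf'c.tendsto a).comp hxφ)))
        (tendsto_const_nhds.sub hxφ)
    have := ge_of_tendsto htend (Filter.Eventually.of_forall fun k => (hxη _).2 y hy)
    simpa using this
  have hfa : f xstar ≤ f a := hmin a ⟨haX, haSOL⟩
  have hlim : μ / 2 * ‖xstar - a‖ ^ 2 ≤ f xstar - f a := by
    have h1 : Filter.Tendsto (fun k => μ / 2 * ‖xstar - xη (ns (φ k))‖ ^ 2)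
        Filter.atTop (nhds (μ / 2 * ‖xstar - a‖ ^ 2)) :=
      Filter.Tendsto.const_mul _ (((tendsto_const_nhds.sub hxφ).norm).pow 2)
    have h2 : Filter.Tendsto (fun k => f xstar - f (xη (ns (φ k))))
        Filter.atTop (nhds (f xstar - f a)) :=
      tendsto_const_nhds.sub ((hfc.tendsto a).comp hxφ)
    exact le_of_tendsto_of_tendsto' h1 h2 fun k => hkey _
  have hsq : ‖xstar - a‖ ^ 2 ≤ 0 := by nlinarith
  have heq : xstar = a := by
    have : ‖xstar - a‖ ^ 2 = 0 := le_antisymm hsq (by positivity)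
    have := pow_eq_zero_iff (n := 2) (by norm_num) |>.mp this
    rw [norm_eq_zero, sub_eq_zero] at this
    exact this
  rw [heq]
  exact hxφ
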